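/- arXiv:2103.05352 — 2 statements merged into one kernel-verified Lean document; each statement's English description precedes it below -/
import Mathlib

section
/- The diagonal subalgebra Δ(A) of Λ(A) is isomorphic as a *-algebra to the algebra s' of slowly increasing sequences with pointwise multiplication: the map φ(ξ) := the diagonal matrix with entries ξ_j is a *-algebra isomorphism from s' onto Δ(A), and for every m ∈ ℕ one has |ξ|_{-m} ≤ Σ_j |ξ_j| j^{-m} ≤ (π/√6) |ξ|_{-(m-1)} for all ξ ∈ s', so φ is also a topological isomorphism. -/
/-- The `n`-th norm `|ξ|_n = (Σ_j |ξ_j|² j^{2n})^{1/2}` of the space `s` of rapidly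
decreasing sequences (indices shifted: `j : ℕ` stands for the positive integer `j+1`). -/
noncomputable def pnorm (n : ℕ) (ξ : ℕ → ℂ) : ℝ :=
  Real.sqrt (∑' j : ℕ, ‖ξ j‖ ^ 2 * ((j : ℝ) + 1) ^ (2 * n))

/-- The dual norm `|ξ|_{-n} = (Σ_j |ξ_j|² j^{-2n})^{1/2}`. -/
noncomputable def mnorm (n : ℕ) (ξ : ℕ → ℂ) : ℝ :=
  Real.sqrt (∑' j : ℕ, ‖ξ j‖ ^ 2 / ((j : ℝ) + 1) ^ (2 * n))

/-- Membership in the space `s` of rapidly decreasing sequences. -/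
def InS (ξ : ℕ → ℂ) : Prop :=
  ∀ n : ℕ, Summable fun j : ℕ => ‖ξ j‖ ^ 2 * ((j : ℝ) + 1) ^ (2 * n)

/-- Membership in the space `s'` of slowly increasing sequences. -/
def InS' (ξ : ℕ → ℂ) : Prop :=
  ∃ n : ℕ, Summable fun j : ℕ => ‖ξ j‖ ^ 2 / ((j : ℝ) + 1) ^ (2 * n)

/-- The pairing `⟨ξ, η⟩ = Σ_j ξ_j conj(η_j)` extending the `ℓ₂` inner product. -/
noncomputable def pairing (ξ η : ℕ → ℂ) : ℂ := ∑' j : ℕ, ξ j * (starRingEnd ℂ) (η j)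

/-- The Köthe PLB-weight `a_{ij,N,n}` (indices shifted by one). -/
noncomputable def kw (i j N n : ℕ) : ℝ :=
  max (((i : ℝ) + 1) ^ N / ((j : ℝ) + 1) ^ n) (((j : ℝ) + 1) ^ N / ((i : ℝ) + 1) ^ n)

/-- Membership in the matrix algebra `Λ(A)`. -/
def memLambda (x : ℕ → ℕ → ℂ) : Prop :=
  ∀ N : ℕ, ∃ n : ℕ, ∃ C : ℝ, ∀ i j : ℕ, ‖x i j‖ * kw i j N n ≤ C

/-- The embedding `φ : s' → Δ(A)` of a sequence as a diagonal matrix. -/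
def diagEmb (ξ : ℕ → ℂ) : ℕ → ℕ → ℂ := fun i j => if i = j then ξ i else 0

set_option maxHeartbeats 1000000


-- Basel
lemma baselHS : HasSum (fun j : ℕ => 1 / ((j : ℝ) + 1) ^ 2) (Real.pi ^ 2 / 6) := by
  have h := hasSum_zeta_two
  rw [← hasSum_nat_add_iff' 1] at h
  simpa using h

-- Cauchy-Schwarz for tsum
lemma tsum_cs (b c : ℕ → ℝ) (hb0 : ∀ j, 0 ≤ b j) (hc0 : ∀ j, 0 ≤ c j)
    (hb : Summable fun j => b j ^ 2) (hc : Summable fun j => c j ^ 2)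
    (hbc : Summable fun j => b j * c j) :
    (∑' j, b j * c j) ≤ Real.sqrt (∑' j, b j ^ 2) * Real.sqrt (∑' j, c j ^ 2) := by
  refine Summable.tsum_le_of_sum_le hbc fun s => ?_
  have h1 : (∑ j ∈ s, b j * c j) ^ 2 ≤ (∑ j ∈ s, b j ^ 2) * (∑ j ∈ s, c j ^ 2) :=
    Finset.sum_mul_sq_le_sq_mul_sq s b c
  have h2 : (∑ j ∈ s, b j * c j) ≤
      Real.sqrt ((∑ j ∈ s, b j ^ 2) * (∑ j ∈ s, c j ^ 2)) := by
    have := Real.sqrt_le_sqrt h1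
    rwa [Real.sqrt_sq (Finset.sum_nonneg fun j _ => mul_nonneg (hb0 j) (hc0 j))] at this
  refine h2.trans ?_
  rw [Real.sqrt_mul (Finset.sum_nonneg fun j _ => sq_nonneg _)]
  gcongr
  · exact Summable.sum_le_tsum s (fun j _ => sq_nonneg _) hb
  · exact Summable.sum_le_tsum s (fun j _ => sq_nonneg _) hc

/-- `φ(ξ) := diag(ξ)` is a `*`-algebra isomorphism from `s'` (with pointwise
multiplication and conjugation) onto the diagonal subalgebra `Δ(A)` of `Λ(A)`, and the
estimates `|ξ|_{-m} ≤ Σ_j |ξ_j| j^{-m} ≤ (π/√6)|ξ|_{-(m-1)}` make it a topological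
isomorphism. -/
theorem stmt13 :
    -- additive and homogeneous
    (∀ ξ η : ℕ → ℂ, diagEmb (ξ + η) = fun i j => diagEmb ξ i j + diagEmb η i j) ∧
    (∀ (c : ℂ) (ξ : ℕ → ℂ), diagEmb (c • ξ) = fun i j => c * diagEmb ξ i j) ∧
    -- multiplicative: diagonal of the pointwise product is the matrix product
    (∀ ξ η : ℕ → ℂ, ∀ i j : ℕ,
      (∑' k : ℕ, diagEmb ξ i k * diagEmb η k j) = diagEmb (fun l => ξ l * η l) i j) ∧
    -- star-compatible: conjugate transpose corresponds to entrywise conjugation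
    (∀ ξ : ℕ → ℂ, (fun i j => (starRingEnd ℂ) (diagEmb ξ j i)) =
      diagEmb fun l => (starRingEnd ℂ) (ξ l)) ∧
    -- injective
    (∀ ξ η : ℕ → ℂ, diagEmb ξ = diagEmb η → ξ = η) ∧
    -- maps `s'` into `Λ(A)` and onto all diagonal matrices of `Λ(A)`
    (∀ ξ : ℕ → ℂ, InS' ξ → memLambda (diagEmb ξ)) ∧
    (∀ x : ℕ → ℕ → ℂ, (∀ i j, i ≠ j → x i j = 0) → memLambda x →
      InS' (fun j => x j j) ∧ diagEmb (fun j => x j j) = x) ∧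
    -- the norm estimates (for `ξ` in the local Hilbert space of `s'` of step `m-1`)
    (∀ (m : ℕ) (ξ : ℕ → ℂ), 1 ≤ m →
      (Summable fun j : ℕ => ‖ξ j‖ ^ 2 / ((j : ℝ) + 1) ^ (2 * (m - 1))) →
      mnorm m ξ ≤ (∑' j : ℕ, ‖ξ j‖ / ((j : ℝ) + 1) ^ m) ∧
      (∑' j : ℕ, ‖ξ j‖ / ((j : ℝ) + 1) ^ m) ≤
        (Real.pi / Real.sqrt 6) * mnorm (m - 1) ξ) := by
  refine ⟨?_, ?_, ?_, ?_, ?_, ?_, ?_, ?_⟩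
  · intro ξ η
    funext i j
    simp only [diagEmb, Pi.add_apply]
    split_ifs <;> simp
  · intro c ξ
    funext i j
    simp only [diagEmb, Pi.smul_apply, smul_eq_mul]
    split_ifs <;> simp
  · intro ξ η i j
    rw [tsum_eq_single i]
    · simp only [diagEmb, if_pos rfl]
      split_ifs <;> simp
    · intro k hk
      have hik : i ≠ k := fun h => hk h.symm
      simp [diagEmb, hik]
  · intro ξ
    funext i j
    simp only [diagEmb]
    rcases eq_or_ne i j with h | h
    · subst h; simp
    · rw [if_neg (fun hji => h hji.symm), if_neg h, map_zero]
  · intro ξ η h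
    funext j
    have := congr_fun (congr_fun h j) j
    simpa [diagEmb] using this
  · rintro ξ ⟨n₀, hn₀⟩ N
    set T := ∑' j : ℕ, ‖ξ j‖ ^ 2 / ((j : ℝ) + 1) ^ (2 * n₀) with hT
    have hT0 : 0 ≤ T := tsum_nonneg fun j => by positivity
    have hbound : ∀ j : ℕ, ‖ξ j‖ ≤ Real.sqrt T * ((j : ℝ) + 1) ^ n₀ := by
      intro j
      have hle : ‖ξ j‖ ^ 2 / ((j : ℝ) + 1) ^ (2 * n₀) ≤ T :=
        Summable.le_tsum hn₀ j fun k _ => by positivity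
      have hp : (0 : ℝ) < ((j : ℝ) + 1) ^ (2 * n₀) := by positivity
      have h2 : ‖ξ j‖ ^ 2 ≤ T * ((j : ℝ) + 1) ^ (2 * n₀) := by
        rw [div_le_iff₀ hp] at hle; linarith
      have := Real.sqrt_le_sqrt h2
      rwa [Real.sqrt_sq (norm_nonneg _), Real.sqrt_mul hT0,
        show (2 : ℕ) * n₀ = n₀ * 2 by ring, pow_mul,
        Real.sqrt_sq (by positivity)] at this
    refine ⟨N + n₀, Real.sqrt T, fun i j => ?_⟩
    rcases eq_or_ne i j with h | h
    · subst h
      simp only [diagEmb, if_pos rfl, kw, max_self]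
      have hp : (0 : ℝ) < ((i : ℝ) + 1) := by positivity
      have hkw : ((i : ℝ) + 1) ^ N / ((i : ℝ) + 1) ^ (N + n₀) =
          1 / ((i : ℝ) + 1) ^ n₀ := by
        rw [pow_add]; field_simp
      rw [hkw]
      have := hbound i
      calc ‖ξ i‖ * (1 / ((i : ℝ) + 1) ^ n₀)
          ≤ (Real.sqrt T * ((i : ℝ) + 1) ^ n₀) * (1 / ((i : ℝ) + 1) ^ n₀) := by
            apply mul_le_mul_of_nonneg_right this; positivity
        _ = Real.sqrt T := by field_simp
    · simp only [diagEmb, if_neg h, norm_zero, zero_mul]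
      positivity
  · intro x hoff hx
    constructor
    · obtain ⟨n, C, hC⟩ := hx 0
      have hkw0 : (0 : ℝ) ≤ kw 0 0 0 n :=
        le_trans (by positivity) (le_max_left _ _)
      have hC0 : 0 ≤ C := (mul_nonneg (norm_nonneg _) hkw0).trans (hC 0 0)
      have hbound : ∀ j : ℕ, ‖x j j‖ ≤ C * ((j : ℝ) + 1) ^ n := by
        intro j
        have := hC j j
        simp only [kw, max_self, pow_zero] at this
        have hp : (0 : ℝ) < ((j : ℝ) + 1) ^ n := by positivity
        rw [mul_one_div, div_le_iff₀ hp] at this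
        linarith [this]
      refine ⟨n + 1, Summable.of_nonneg_of_le (fun j => by positivity)
        (fun j => ?_) (baselHS.summable.mul_left (C ^ 2))⟩
      have hp : (0 : ℝ) < ((j : ℝ) + 1) := by positivity
      have h1 : ‖x j j‖ ^ 2 ≤ C ^ 2 * ((j : ℝ) + 1) ^ (2 * n) := by
        have := hbound j
        have h2 := mul_le_mul this this (norm_nonneg _) (by positivity)
        calc ‖x j j‖ ^ 2 = ‖x j j‖ * ‖x j j‖ := sq ..
          _ ≤ (C * ((j : ℝ) + 1) ^ n) * (C * ((j : ℝ) + 1) ^ n) := h2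
          _ = C ^ 2 * ((j : ℝ) + 1) ^ (2 * n) := by ring
      calc ‖x j j‖ ^ 2 / ((j : ℝ) + 1) ^ (2 * (n + 1))
          ≤ (C ^ 2 * ((j : ℝ) + 1) ^ (2 * n)) / ((j : ℝ) + 1) ^ (2 * (n + 1)) := by
            gcongr
        _ = C ^ 2 * (1 / ((j : ℝ) + 1) ^ 2) := by
            rw [show 2 * (n + 1) = 2 * n + 2 by ring, pow_add]
            field_simp
    · funext i j
      simp only [diagEmb]
      rcases eq_or_ne i j with h | h
      · subst h; simp
      · rw [if_neg h, hoff i j h]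
  · intro m ξ hm hsum
    set b : ℕ → ℝ := fun j => ‖ξ j‖ / ((j : ℝ) + 1) ^ (m - 1) with hb
    set c : ℕ → ℝ := fun j => 1 / ((j : ℝ) + 1) with hc
    have hbc : ∀ j, b j * c j = ‖ξ j‖ / ((j : ℝ) + 1) ^ m := by
      intro j
      have : ((j : ℝ) + 1) ^ (m - 1) * ((j : ℝ) + 1) = ((j : ℝ) + 1) ^ m := by
        rw [← pow_succ, Nat.sub_add_cancel hm]
      simp only [hb, hc]
      rw [div_mul_div_comm, mul_one, this]
    have hb2 : ∀ j, b j ^ 2 = ‖ξ j‖ ^ 2 / ((j : ℝ) + 1) ^ (2 * (m - 1)) := by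
      intro j
      simp only [hb, div_pow]
      rw [← pow_mul, mul_comm (m - 1) 2]
    have hbsum : Summable fun j => b j ^ 2 := by
      simpa only [hb2] using hsum
    have hcsum : Summable fun j => c j ^ 2 := by
      simpa [hc] using baselHS.summable
    have hbcsum : Summable fun j => b j * c j := by
      refine Summable.of_nonneg_of_le (fun j => by positivity) (fun j => ?_)
        ((hbsum.add hcsum).div_const 2)
      have h := sq_nonneg (b j - c j)
      have hb0 : 0 ≤ b j := by positivity
      have hc0 : 0 ≤ c j := by positivity
      nlinarith
    have hasum : Summable fun j => ‖ξ j‖ / ((j : ℝ) + 1) ^ m := by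
      simpa only [hbc] using hbcsum
    constructor
    · -- mnorm m ξ ≤ Σ a
      set S := ∑' j : ℕ, ‖ξ j‖ / ((j : ℝ) + 1) ^ m with hS
      have hS0 : 0 ≤ S := tsum_nonneg fun j => by positivity
      have ha2sum : Summable fun j => (‖ξ j‖ / ((j : ℝ) + 1) ^ m) ^ 2 := by
        refine Summable.of_nonneg_of_le (fun j => by positivity) (fun j => ?_)
          (hasum.mul_right S)
        have hle : ‖ξ j‖ / ((j : ℝ) + 1) ^ m ≤ S :=
          Summable.le_tsum hasum j fun k _ => by positivity
        have h0 : 0 ≤ ‖ξ j‖ / ((j : ℝ) + 1) ^ m := by positivity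
        nlinarith
      have key : (∑' j : ℕ, ‖ξ j‖ ^ 2 / ((j : ℝ) + 1) ^ (2 * m)) ≤ S ^ 2 := by
        have h1 : ∀ j : ℕ, ‖ξ j‖ ^ 2 / ((j : ℝ) + 1) ^ (2 * m) =
            (‖ξ j‖ / ((j : ℝ) + 1) ^ m) ^ 2 := by
          intro j; rw [div_pow, ← pow_mul, mul_comm m 2]
        calc (∑' j : ℕ, ‖ξ j‖ ^ 2 / ((j : ℝ) + 1) ^ (2 * m))
            = ∑' j : ℕ, (‖ξ j‖ / ((j : ℝ) + 1) ^ m) ^ 2 := by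
              exact tsum_congr h1
          _ ≤ ∑' j : ℕ, (‖ξ j‖ / ((j : ℝ) + 1) ^ m) * S := by
              refine Summable.tsum_le_tsum (fun j => ?_) ha2sum (hasum.mul_right S)
              have hle : ‖ξ j‖ / ((j : ℝ) + 1) ^ m ≤ S :=
                Summable.le_tsum hasum j fun k _ => by positivity
              have h0 : 0 ≤ ‖ξ j‖ / ((j : ℝ) + 1) ^ m := by positivity
              nlinarith
          _ = S * S := by rw [tsum_mul_right]
          _ = S ^ 2 := (sq S).symm
      have := Real.sqrt_le_sqrt key
      rwa [Real.sqrt_sq hS0] at this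
    · -- Σ a ≤ (π/√6) mnorm (m-1) ξ
      have hcs := tsum_cs b c (fun j => by positivity) (fun j => by positivity)
        hbsum hcsum hbcsum
      have e1 : (∑' j : ℕ, ‖ξ j‖ / ((j : ℝ) + 1) ^ m) = ∑' j, b j * c j :=
        (tsum_congr hbc).symm
      have e2 : Real.sqrt (∑' j, b j ^ 2) = mnorm (m - 1) ξ := by
        rw [mnorm]
        congr 1
        exact tsum_congr hb2
      have e3 : Real.sqrt (∑' j, c j ^ 2) = Real.pi / Real.sqrt 6 := by
        have : (∑' j, c j ^ 2) = Real.pi ^ 2 / 6 := by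
          rw [show (∑' j, c j ^ 2) = ∑' j : ℕ, 1 / ((j : ℝ) + 1) ^ 2 from
            tsum_congr fun j => by simp [hc, div_pow]]
          exact baselHS.tsum_eq
        rw [this, Real.sqrt_div (sq_nonneg _), Real.sqrt_sq Real.pi_pos.le]
      rw [e1]
      refine hcs.trans_eq ?_
      rw [e2, e3, mul_comm]
end

section
/- The matrix algebra Λ(A) := {x ∈ ℂ^{ℕ×ℕ} : ∀N ∃n, sup_{i,j} |x_{ij}| max(i^N/j^n, j^N/i^n) < ∞} is closed under matrix multiplication: for x, y ∈ Λ(A), the series (xy)_{ij} = Σ_k x_{ik} y_{kj} converges absolutely and xy ∈ Λ(A). -/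
private lemma kw_nonneg (i j N n : ℕ) : 0 ≤ kw i j N n :=
  le_trans (by positivity) (le_max_left _ _)

private lemma C_nonneg (x : ℕ → ℕ → ℂ) {N n : ℕ} {C : ℝ}
    (h : ∀ i j, ‖x i j‖ * kw i j N n ≤ C) : 0 ≤ C :=
  le_trans (mul_nonneg (norm_nonneg _) (kw_nonneg 0 0 N n)) (h 0 0)

/-- First-form bound: `‖x i j‖ ≤ C (j+1)^n / (i+1)^N`. -/
private lemma bound_of₁ (x : ℕ → ℕ → ℂ) {N n : ℕ} {C : ℝ}
    (h : ∀ i j, ‖x i j‖ * kw i j N n ≤ C) (i j : ℕ) :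
    ‖x i j‖ ≤ C * ((j:ℝ)+1)^n / ((i:ℝ)+1)^N := by
  have hP : (0:ℝ) < ((i:ℝ)+1)^N := by positivity
  have hQ : (0:ℝ) < ((j:ℝ)+1)^n := by positivity
  have h1 : ‖x i j‖ * (((i:ℝ)+1)^N / ((j:ℝ)+1)^n) ≤ C :=
    le_trans (mul_le_mul_of_nonneg_left (le_max_left _ _) (norm_nonneg _)) (h i j)
  rw [mul_div_assoc', div_le_iff₀ hQ] at h1
  rw [le_div_iff₀ hP]
  linarith
/-- Second-form bound: `‖x i j‖ ≤ C (i+1)^n / (j+1)^N`. -/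
private lemma bound_of₂ (x : ℕ → ℕ → ℂ) {N n : ℕ} {C : ℝ}
    (h : ∀ i j, ‖x i j‖ * kw i j N n ≤ C) (i j : ℕ) :
    ‖x i j‖ ≤ C * ((i:ℝ)+1)^n / ((j:ℝ)+1)^N := by
  have hP : (0:ℝ) < ((j:ℝ)+1)^N := by positivity
  have hQ : (0:ℝ) < ((i:ℝ)+1)^n := by positivity
  have h1 : ‖x i j‖ * (((j:ℝ)+1)^N / ((i:ℝ)+1)^n) ≤ C :=
    le_trans (mul_le_mul_of_nonneg_left (le_max_right _ _) (norm_nonneg _)) (h i j)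
  rw [mul_div_assoc', div_le_iff₀ hQ] at h1
  rw [le_div_iff₀ hP]
  linarith

private lemma hS_summable : Summable (fun k : ℕ => 1 / ((k:ℝ)+1)^2) := by
  have h0 : Summable (fun n : ℕ => 1 / (n:ℝ)^2) :=
    Real.summable_one_div_nat_pow.mpr (by norm_num)
  have h2 := (summable_nat_add_iff 1).mpr h0
  exact h2.congr (fun n => by push_cast; ring)

noncomputable def Sval : ℝ := ∑' k : ℕ, 1 / ((k:ℝ)+1)^2

private lemma Sval_nonneg : 0 ≤ Sval :=
  tsum_nonneg (fun k => by positivity)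

/-- Core estimate: termwise bound, summability, and tsum bound. -/
private lemma sum_bound (x y : ℕ → ℕ → ℂ) (N a b : ℕ) (C D : ℝ) (hC : 0 ≤ C) (hD : 0 ≤ D)
    (hx : ∀ i k, ‖x i k‖ ≤ C * ((k:ℝ)+1)^a / ((i:ℝ)+1)^N)
    (hy : ∀ k j, ‖y k j‖ ≤ D * ((j:ℝ)+1)^b / ((k:ℝ)+1)^(a+2))
    (i j : ℕ) :
    (Summable fun k : ℕ => ‖x i k‖ * ‖y k j‖) ∧
    (∑' k : ℕ, ‖x i k‖ * ‖y k j‖) ≤ (C * D * Sval) * ((j:ℝ)+1)^b / ((i:ℝ)+1)^N := by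
  have key : ∀ k : ℕ, ‖x i k‖ * ‖y k j‖ ≤
      (C * D * (((j:ℝ)+1)^b / ((i:ℝ)+1)^N)) * (1 / ((k:ℝ)+1)^2) := by
    intro k
    have h1 := hx i k
    have h2 := hy k j
    have h3 : ‖x i k‖ * ‖y k j‖ ≤
        (C * ((k:ℝ)+1)^a / ((i:ℝ)+1)^N) * (D * ((j:ℝ)+1)^b / ((k:ℝ)+1)^(a+2)) :=
      mul_le_mul h1 h2 (norm_nonneg _) (by positivity)
    refine h3.trans (le_of_eq ?_)
    have hk : ((k:ℝ)+1)^(a+2) = ((k:ℝ)+1)^a * ((k:ℝ)+1)^2 := pow_add _ _ _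
    rw [hk]
    have hka : ((k:ℝ)+1)^a ≠ 0 := by positivity
    have hk2 : ((k:ℝ)+1)^2 ≠ 0 := by positivity
    have hiN : ((i:ℝ)+1)^N ≠ 0 := by positivity
    field_simp
  have hsum2 : Summable (fun k : ℕ =>
      (C * D * (((j:ℝ)+1)^b / ((i:ℝ)+1)^N)) * (1 / ((k:ℝ)+1)^2)) :=
    hS_summable.mul_left _
  have hsum : Summable fun k : ℕ => ‖x i k‖ * ‖y k j‖ :=
    Summable.of_nonneg_of_le (fun k => mul_nonneg (norm_nonneg _) (norm_nonneg _)) key hsum2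
  refine ⟨hsum, ?_⟩
  calc (∑' k : ℕ, ‖x i k‖ * ‖y k j‖)
      ≤ ∑' k : ℕ, (C * D * (((j:ℝ)+1)^b / ((i:ℝ)+1)^N)) * (1 / ((k:ℝ)+1)^2) :=
        Summable.tsum_le_tsum key hsum hsum2
    _ = (C * D * (((j:ℝ)+1)^b / ((i:ℝ)+1)^N)) * Sval := tsum_mul_left
    _ = (C * D * Sval) * ((j:ℝ)+1)^b / ((i:ℝ)+1)^N := by ring

private lemma step (K P Q R z : ℝ) (hK : 0 ≤ K) (hP : 0 < P) (hQ : 0 < Q) (hR : 0 < R)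
    (hQR : Q ≤ R) (hz : z ≤ K * Q / P) : z * (P / R) ≤ K := by
  have h1 : z * (P / R) ≤ (K * Q / P) * (P / R) :=
    mul_le_mul_of_nonneg_right hz (by positivity)
  have h2 : (K * Q / P) * (P / R) = K * (Q / R) := by
    field_simp
  have h3 : Q / R ≤ 1 := (div_le_one hR).mpr hQR
  calc z * (P / R) ≤ K * (Q / R) := by rw [h2] at h1; exact h1
    _ ≤ K * 1 := mul_le_mul_of_nonneg_left h3 hK
    _ = K := mul_one K

/-- `Λ(A)` is closed under matrix multiplication: the series `(xy)_{ij} = Σ_k x_{ik}y_{kj}`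
converges absolutely and `xy ∈ Λ(A)`. -/
theorem stmt15 (x y : ℕ → ℕ → ℂ) (hx : memLambda x) (hy : memLambda y) :
    (∀ i j : ℕ, Summable fun k : ℕ => ‖x i k‖ * ‖y k j‖) ∧
    memLambda fun i j => ∑' k : ℕ, x i k * y k j := by
  -- the two-sided estimate machinery, for any N
  have main : ∀ N : ℕ, ∃ a : ℕ, ∃ K : ℝ, 0 ≤ K ∧ ∀ i j : ℕ,
      (Summable fun k : ℕ => ‖x i k‖ * ‖y k j‖) ∧
      (∑' k : ℕ, ‖x i k‖ * ‖y k j‖) ≤ K * ((j:ℝ)+1)^a / ((i:ℝ)+1)^N := by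
    intro N
    obtain ⟨n1, C1, hC1⟩ := hx N
    obtain ⟨n2, C2, hC2⟩ := hy (n1 + 2)
    have hC1' := C_nonneg x hC1
    have hC2' := C_nonneg y hC2
    refine ⟨n2, C1 * C2 * Sval, mul_nonneg (mul_nonneg hC1' hC2') Sval_nonneg, ?_⟩
    intro i j
    exact sum_bound x y N n1 n2 C1 C2 hC1' hC2'
      (fun i k => bound_of₁ x hC1 i k)
      (fun k j => bound_of₁ y hC2 k j) i j
  obtain ⟨a0, K0, hK0, hmain0⟩ := main 0
  constructor
  · intro i j; exact (hmain0 i j).1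
  · intro N
    -- branch A : estimate against (i+1)^N / (j+1)^n
    obtain ⟨a, K, hK, hA⟩ := main N
    -- branch B : symmetric estimate, swap roles of x and y
    have mainB : ∃ b : ℕ, ∃ L : ℝ, 0 ≤ L ∧ ∀ i j : ℕ,
        (∑' k : ℕ, ‖x i k‖ * ‖y k j‖) ≤ L * ((i:ℝ)+1)^b / ((j:ℝ)+1)^N := by
      obtain ⟨m1, D1, hD1⟩ := hy N
      obtain ⟨m2, D2, hD2⟩ := hx (m1 + 2)
      have hD1' := C_nonneg y hD1
      have hD2' := C_nonneg x hD2
      refine ⟨m2, D1 * D2 * Sval, mul_nonneg (mul_nonneg hD1' hD2') Sval_nonneg, ?_⟩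
      intro i j
      have := (sum_bound (fun p q => y q p) (fun p q => x q p) N m1 m2 D1 D2 hD1' hD2'
        (fun p k => bound_of₂ y hD1 k p)
        (fun k q => bound_of₂ x hD2 q k) j i).2
      calc (∑' k : ℕ, ‖x i k‖ * ‖y k j‖)
          = ∑' k : ℕ, ‖y k j‖ * ‖x i k‖ := by
            apply tsum_congr; intro k; ring
        _ ≤ D1 * D2 * Sval * ((i:ℝ)+1)^m2 / ((j:ℝ)+1)^N := this
    obtain ⟨b, L, hL, hB⟩ := mainB
    refine ⟨max a b, max K L, ?_⟩
    intro i j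
    have hnorm : ‖∑' k : ℕ, x i k * y k j‖ ≤ ∑' k : ℕ, ‖x i k‖ * ‖y k j‖ := by
      have hs : Summable fun k : ℕ => ‖x i k * y k j‖ := by
        refine ((hmain0 i j).1).congr (fun k => ?_)
        rw [norm_mul]
      calc ‖∑' k : ℕ, x i k * y k j‖ ≤ ∑' k : ℕ, ‖x i k * y k j‖ :=
            norm_tsum_le_tsum_norm hs
        _ = ∑' k : ℕ, ‖x i k‖ * ‖y k j‖ := by
            apply tsum_congr; intro k; rw [norm_mul]
    have hjb : (0:ℝ) < ((j:ℝ)+1)^(max a b) := by positivity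
    have hib : (0:ℝ) < ((i:ℝ)+1)^(max a b) := by positivity
    have hj1 : (1:ℝ) ≤ (j:ℝ)+1 := by
      have : (0:ℝ) ≤ (j:ℝ) := Nat.cast_nonneg j
      linarith
    have hi1 : (1:ℝ) ≤ (i:ℝ)+1 := by
      have : (0:ℝ) ≤ (i:ℝ) := Nat.cast_nonneg i
      linarith
    -- split the max in kw
    rw [show kw i j N (max a b) =
        max (((i:ℝ)+1)^N / ((j:ℝ)+1)^(max a b)) (((j:ℝ)+1)^N / ((i:ℝ)+1)^(max a b)) from rfl,
      mul_max_of_nonneg _ _ (norm_nonneg _)]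
    apply max_le
    · -- branch A
      have hz : ‖∑' k : ℕ, x i k * y k j‖ ≤ K * ((j:ℝ)+1)^a / ((i:ℝ)+1)^N :=
        hnorm.trans (hA i j).2
      have hQR : ((j:ℝ)+1)^a ≤ ((j:ℝ)+1)^(max a b) :=
        pow_le_pow_right₀ hj1 (le_max_left a b)
      exact le_trans (step K (((i:ℝ)+1)^N) (((j:ℝ)+1)^a) (((j:ℝ)+1)^(max a b)) _
        hK (by positivity) (by positivity) hjb hQR hz) (le_max_left K L)
    · -- branch B
      have hz : ‖∑' k : ℕ, x i k * y k j‖ ≤ L * ((i:ℝ)+1)^b / ((j:ℝ)+1)^N :=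
        hnorm.trans (hB i j)
      have hQR : ((i:ℝ)+1)^b ≤ ((i:ℝ)+1)^(max a b) :=
        pow_le_pow_right₀ hi1 (le_max_right a b)
      exact le_trans (step L (((j:ℝ)+1)^N) (((i:ℝ)+1)^b) (((i:ℝ)+1)^(max a b)) _
        hL (by positivity) (by positivity) hib hQR hz) (le_max_right K L)
end
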